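/- arXiv:2410.21693 — 2 statements merged into one kernel-verified Lean document; each statement's English description precedes it below -/
import Mathlib

section
/- If f is analytic on the open unit disk with |f(z)| ≤ 1 for all |z| < 1 and f(z) = ∑_{k=0}^∞ a_k z^k, then for every k ≥ 1 one has |a_k| ≤ 1 - |a_0|^2. -/
open Metric Complex Filter FormalMultilinearSeries

lemma mobius_ineq (w c : ℂ) (hw : ‖w‖ ≤ 1) (hc : ‖c‖ ≤ 1) :
    ‖w - c‖ ≤ ‖1 - (starRingEnd ℂ) c * w‖ := by
  have key : Complex.normSq (1 - (starRingEnd ℂ) c * w) - Complex.normSq (w - c)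
      = (1 - Complex.normSq c) * (1 - Complex.normSq w) := by
    simp [Complex.normSq_apply, Complex.sub_re, Complex.sub_im, Complex.mul_re, Complex.mul_im]
    ring
  have h1 : Complex.normSq c ≤ 1 := by
    rw [Complex.normSq_eq_norm_sq]; nlinarith [norm_nonneg c]
  have h2 : Complex.normSq w ≤ 1 := by
    rw [Complex.normSq_eq_norm_sq]; nlinarith [norm_nonneg w]
  have h3 : Complex.normSq (w - c) ≤ Complex.normSq (1 - (starRingEnd ℂ) c * w) := by nlinarith
  calc ‖w - c‖ = Real.sqrt (Complex.normSq (w - c)) := by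
        rw [Complex.norm_def]
    _ ≤ Real.sqrt (Complex.normSq (1 - (starRingEnd ℂ) c * w)) := Real.sqrt_le_sqrt h3
    _ = _ := by rw [Complex.norm_def]

lemma ofScalars_coeff (a : ℕ → ℂ) (n : ℕ) : (ofScalars ℂ a).coeff n = a n := by
  simp [FormalMultilinearSeries.coeff, ofScalars, smul_eq_mul, List.prod_ofFn]

lemma hasFPS_of_hasSum {f : ℂ → ℂ} {a : ℕ → ℂ} {R : ℝ} (hR : 0 < R)
    (hsum : ∀ z ∈ ball (0 : ℂ) R, HasSum (fun k : ℕ => a k * z ^ k) (f z)) :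
    HasFPowerSeriesAt f (ofScalars ℂ a) 0 := by
  rw [hasFPowerSeriesAt_iff]
  filter_upwards [ball_mem_nhds (0:ℂ) hR] with z hz
  have := hsum z hz
  simp only [zero_add, ofScalars_coeff, smul_eq_mul]
  convert this using 2 with n
  · rfl
  ring

lemma norm_coeff_le {f : ℂ → ℂ} {a : ℕ → ℂ} {M : ℝ}
    (hf : DifferentiableOn ℂ f (ball (0:ℂ) 1))
    (hb : ∀ z ∈ ball (0:ℂ) 1, ‖f z‖ ≤ M)
    (hsum : ∀ z ∈ ball (0:ℂ) 1, HasSum (fun k : ℕ => a k * z ^ k) (f z)) (m : ℕ) :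
    ‖a m‖ ≤ M := by
  have hM : 0 ≤ M := le_trans (norm_nonneg _) (hb 0 (by simp))
  have key : ∀ r : ℝ, r ∈ Set.Ioo (0:ℝ) 1 → ‖a m‖ ≤ M / r ^ m := by
    rintro r ⟨hr0, hr1⟩
    set r' : NNReal := r.toNNReal with hr'
    have hr'0 : (0:NNReal) < r' := by simp [hr', hr0]
    have hrc : (r' : ℝ) = r := Real.coe_toNNReal r hr0.le
    have hsub : closedBall (0:ℂ) r' ⊆ ball (0:ℂ) 1 := by
      rw [hrc]; exact closedBall_subset_ball (by linarith)
    have hp2 : HasFPowerSeriesOnBall f (cauchyPowerSeries f 0 r') 0 r' :=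
      (hf.mono hsub).hasFPowerSeriesOnBall hr'0
    have heq : ofScalars ℂ a = cauchyPowerSeries f 0 r' :=
      (hasFPS_of_hasSum one_pos hsum).eq_formalMultilinearSeries hp2.hasFPowerSeriesAt
    have h1 : ‖a m‖ ≤ ‖cauchyPowerSeries f 0 r' m‖ := by
      rw [← ofScalars_coeff a m, heq]
      calc ‖(cauchyPowerSeries f 0 r').coeff m‖
          = ‖(cauchyPowerSeries f 0 r' m) (fun _ => 1)‖ := rfl
        _ ≤ ‖cauchyPowerSeries f 0 r' m‖ * ∏ _i : Fin m, ‖(1:ℂ)‖ :=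
            ContinuousMultilinearMap.le_opNorm _ _
        _ = ‖cauchyPowerSeries f 0 r' m‖ := by simp
    have hcont : Continuous fun θ : ℝ => ‖f (circleMap 0 r θ)‖ := by
      refine (hf.continuousOn.comp_continuous (continuous_circleMap 0 _) fun θ => ?_).norm
      simp [mem_ball, norm_circleMap_zero, abs_of_pos hr0, hr1]
    have hint : (∫ θ : ℝ in (0)..2 * Real.pi, ‖f (circleMap 0 r θ)‖)
        ≤ ∫ _θ : ℝ in (0)..2 * Real.pi, M := by
      refine intervalIntegral.integral_mono_on (by positivity : (0:ℝ) ≤ 2 * Real.pi)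
        (hcont.intervalIntegrable 0 (2 * Real.pi)) intervalIntegrable_const (fun θ _ => ?_)
      refine hb _ ?_
      simp [mem_ball, norm_circleMap_zero, abs_of_pos hr0, hr1]
    have hint2 : (∫ θ : ℝ in (0)..2 * Real.pi, ‖f (circleMap 0 r θ)‖) ≤ 2 * Real.pi * M := by
      simpa [mul_comm] using hint
    have h2 := norm_cauchyPowerSeries_le f 0 (r':ℝ) m
    rw [hrc] at h2 h1
    have h3 : ((2 * Real.pi)⁻¹ * ∫ θ : ℝ in (0)..2 * Real.pi, ‖f (circleMap 0 r θ)‖)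
        * |r|⁻¹ ^ m ≤ M / r ^ m := by
      rw [abs_of_pos hr0, div_eq_mul_inv, ← inv_pow]
      refine mul_le_mul_of_nonneg_right ?_ (by positivity)
      rw [inv_mul_le_iff₀ (by positivity)]
      exact hint2
    exact h1.trans (h2.trans h3)
  have hlim : Filter.Tendsto (fun r : ℝ => M / r ^ m) (nhdsWithin 1 (Set.Iio 1)) (nhds M) := by
    have : Filter.Tendsto (fun r : ℝ => M / r ^ m) (nhds 1) (nhds (M / 1 ^ m)) := by
      refine Filter.Tendsto.div tendsto_const_nhds ((continuous_pow m).tendsto 1) (by norm_num)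
    simpa using this.mono_left nhdsWithin_le_nhds
  refine ge_of_tendsto hlim ?_
  filter_upwards [Ioo_mem_nhdsLT_of_mem (by norm_num : (1:ℝ) ∈ Set.Ioc (0:ℝ) 1)] with r hr
  exact key r hr


open Metric in
/-- If `f` is analytic on the unit disk, bounded by `1`, with Taylor coefficients
`a k`, then `|a k| ≤ 1 - |a 0|²` for all `k ≥ 1`. -/
theorem stmt1 (f : ℂ → ℂ) (a : ℕ → ℂ)
    (hf : DifferentiableOn ℂ f (ball (0 : ℂ) 1))
    (hb : ∀ z ∈ ball (0 : ℂ) 1, ‖f z‖ ≤ 1)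
    (hsum : ∀ z ∈ ball (0 : ℂ) 1, HasSum (fun k : ℕ => a k * z ^ k) (f z)) :
    ∀ k : ℕ, 1 ≤ k → ‖a k‖ ≤ 1 - ‖a 0‖ ^ 2 := by
  intro k hk
  have hk0 : k ≠ 0 := by omega
  have hkC : (k : ℂ) ≠ 0 := Nat.cast_ne_zero.mpr hk0
  set ω : ℂ := Complex.exp (2 * Real.pi * I / k) with hωdef
  have hω : IsPrimitiveRoot ω k := Complex.isPrimitiveRoot_exp k hk0
  have hω1 : ‖ω‖ = 1 := by
    rw [hωdef, Complex.norm_exp]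
    norm_num [Complex.div_re]
  -- the averaged function
  set g : ℂ → ℂ := fun z => (k : ℂ)⁻¹ * ∑ j ∈ Finset.range k, f (ω ^ j * z) with hgdef
  set b : ℕ → ℂ := fun m => ((k : ℂ)⁻¹ * ∑ j ∈ Finset.range k, (ω ^ m) ^ j) * a m with hbdef
  have hmem : ∀ z ∈ ball (0 : ℂ) 1, ∀ j : ℕ, ω ^ j * z ∈ ball (0 : ℂ) 1 := by
    intro z hz j
    simp only [mem_ball, dist_zero_right] at hz ⊢
    rw [norm_mul, norm_pow, hω1, one_pow, one_mul]
    exact hz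
  have hg_diff : DifferentiableOn ℂ g (ball (0 : ℂ) 1) := by
    refine DifferentiableOn.const_mul ?_ _
    refine DifferentiableOn.fun_sum fun j _ => ?_
    have : (fun z => f (ω ^ j * z)) = f ∘ fun z => ω ^ j * z := rfl
    rw [this]
    exact hf.comp ((differentiable_id.const_mul _).differentiableOn)
      (fun z hz => hmem z hz j)
  have hg_b : ∀ z ∈ ball (0 : ℂ) 1, ‖g z‖ ≤ 1 := by
    intro z hz
    rw [hgdef]
    calc ‖(k : ℂ)⁻¹ * ∑ j ∈ Finset.range k, f (ω ^ j * z)‖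
        ≤ ‖(k : ℂ)⁻¹‖ * ∑ j ∈ Finset.range k, ‖f (ω ^ j * z)‖ := by
          rw [norm_mul]
          exact mul_le_mul_of_nonneg_left (norm_sum_le _ _) (norm_nonneg _)
      _ ≤ (k : ℝ)⁻¹ * ∑ _j ∈ Finset.range k, (1 : ℝ) := by
          rw [norm_inv, Complex.norm_natCast]
          refine mul_le_mul_of_nonneg_left ?_ (by positivity)
          exact Finset.sum_le_sum fun j _ => hb _ (hmem z hz j)
      _ = 1 := by
          rw [Finset.sum_const, Finset.card_range, nsmul_eq_mul, mul_one,
            inv_mul_cancel₀ (by exact_mod_cast hk0 : (k:ℝ) ≠ 0)]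
  have hg_sum : ∀ z ∈ ball (0 : ℂ) 1, HasSum (fun m : ℕ => b m * z ^ m) (g z) := by
    intro z hz
    have h1 : ∀ j ∈ Finset.range k,
        HasSum (fun m : ℕ => a m * (ω ^ j * z) ^ m) (f (ω ^ j * z)) :=
      fun j _ => hsum _ (hmem z hz j)
    have h2 := (hasSum_sum h1).mul_left ((k : ℂ)⁻¹)
    convert h2 using 2 with m
    · rfl
    rw [hbdef]
    simp only
    rw [Finset.mul_sum, Finset.mul_sum]
    rw [Finset.sum_mul, Finset.sum_mul]
    refine Finset.sum_congr rfl fun j _ => ?_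
    rw [mul_pow, ← pow_mul, ← pow_mul, mul_comm j m]
    ring
  have hb0 : b 0 = a 0 := by
    rw [hbdef]; simp [inv_mul_cancel₀ hkC]
  have hbk : b k = a k := by
    rw [hbdef]
    simp only [hω.pow_eq_one, one_pow, Finset.sum_const, Finset.card_range, nsmul_eq_mul,
      mul_one]
    rw [inv_mul_cancel₀ hkC, one_mul]
  have hbj : ∀ j, 0 < j → j < k → b j = 0 := by
    intro j hj0 hjk
    have hne : ω ^ j ≠ 1 := hω.pow_ne_one_of_pos_of_lt hj0.ne' hjk
    have hsumgeom : ∑ i ∈ Finset.range k, (ω ^ j) ^ i = 0 := by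
      rw [geom_sum_eq hne]
      rw [← pow_mul, mul_comm j k, pow_mul, hω.pow_eq_one, one_pow, sub_self, zero_div]
    rw [hbdef]; simp [hsumgeom]
  -- coefficient bounds
  have hble : ∀ m, ‖b m‖ ≤ 1 := norm_coeff_le hg_diff hg_b hg_sum
  have ha0le : ‖a 0‖ ≤ 1 := norm_coeff_le hf hb hsum 0
  -- the tail series t
  set q : FormalMultilinearSeries ℂ ℂ ℂ := ofScalars ℂ (fun m => b (m + k)) with hqdef
  have hqr : 1 ≤ q.radius := by
    refine ENNReal.le_of_forall_nnreal_lt fun r hr => ?_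
    refine q.le_radius_of_bound 1 fun n => ?_
    have h1 : ‖q n‖ ≤ 1 := by
      rw [hqdef, ofScalars_norm]
      exact hble _
    have h2 : (r : ℝ) ^ n ≤ 1 := by
      refine pow_le_one₀ r.coe_nonneg ?_
      exact_mod_cast (le_of_lt (by exact_mod_cast hr))
    nlinarith [norm_nonneg (q n), pow_nonneg r.coe_nonneg n]
  have hqpos : 0 < q.radius := lt_of_lt_of_le one_pos hqr
  set t : ℂ → ℂ := q.sum with htdef
  have hqball : HasFPowerSeriesOnBall t q 0 q.radius := q.hasFPowerSeriesOnBall hqpos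
  have hball_sub : ∀ z ∈ ball (0 : ℂ) 1, z ∈ Metric.eball (0 : ℂ) q.radius := by
    intro z hz
    rw [Metric.mem_eball, edist_zero_right]
    calc (‖z‖₊ : ENNReal) < 1 := by
          rw [← ENNReal.coe_one, ENNReal.coe_lt_coe, ← NNReal.coe_lt_coe]
          simpa [mem_ball, dist_zero_right] using hz
      _ ≤ q.radius := hqr
  have ht_diff : DifferentiableOn ℂ t (ball (0 : ℂ) 1) :=
    DifferentiableOn.mono hqball.differentiableOn hball_sub
  have ht_sum : ∀ z ∈ ball (0 : ℂ) 1, HasSum (fun m : ℕ => b (m + k) * z ^ m) (t z) := by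
    intro z hz
    have := q.hasSum (hball_sub z hz)
    convert this using 2 with m
    · rfl
    rw [hqdef]
    simp [ofScalars, smul_eq_mul, List.prod_ofFn]
  have ht0 : t 0 = b k := by
    have h1 := ht_sum 0 (by simp)
    have h2 : HasSum (fun m : ℕ => b (m + k) * (0:ℂ) ^ m) (b (0 + k) * (0:ℂ) ^ 0) := by
      refine hasSum_single 0 fun m hm => ?_
      rw [zero_pow hm, mul_zero]
    have := h1.unique h2
    simpa using this
  have hfactor : ∀ z ∈ ball (0 : ℂ) 1, g z - a 0 = z ^ k * t z := by
    intro z hz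
    have h2 := (hasSum_nat_add_iff' (f := fun m => b m * z ^ m) k).2 (hg_sum z hz)
    have h3 := (ht_sum z hz).mul_left (z ^ k)
    have h4 : (fun m : ℕ => z ^ k * (b (m + k) * z ^ m)) = fun m : ℕ => b (m + k) * z ^ (m + k) := by
      funext m; rw [pow_add]; ring
    rw [h4] at h3
    have h5 := h2.unique h3
    have h6 : ∑ i ∈ Finset.range k, b i * z ^ i = a 0 := by
      rw [Finset.sum_eq_single 0]
      · rw [hb0, pow_zero, mul_one]
      · intro i hi hi0
        rw [hbj i (Nat.pos_of_ne_zero hi0) (Finset.mem_range.mp hi), zero_mul]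
      · intro h
        exact absurd (Finset.mem_range.mpr (Nat.pos_of_ne_zero hk0)) h
    rw [h6] at h5
    exact h5
  have hg0 : g 0 = a 0 := by
    have := hfactor 0 (by simp)
    rw [zero_pow hk0, zero_mul, sub_eq_zero] at this
    exact this
  set c : ℂ := a 0 with hcdef
  rcases lt_or_eq_of_le ha0le with hlt | heq
  · -- main case : ‖c‖ < 1
    set ψ : ℂ → ℂ := fun z => t z / (1 - (starRingEnd ℂ) c * g z) with hψdef
    have hden : ∀ z ∈ ball (0 : ℂ) 1, 1 - (starRingEnd ℂ) c * g z ≠ 0 := by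
      intro z hz h0
      have h1 : (1:ℂ) = (starRingEnd ℂ) c * g z := by rwa [sub_eq_zero] at h0
      have h2 : (1:ℝ) = ‖c‖ * ‖g z‖ := by
        calc (1:ℝ) = ‖(1:ℂ)‖ := by simp
          _ = ‖(starRingEnd ℂ) c * g z‖ := by rw [h1]
          _ = ‖c‖ * ‖g z‖ := by rw [norm_mul, RCLike.norm_conj]
      nlinarith [hg_b z hz, norm_nonneg (g z), norm_nonneg c]
    have hψdiff : DifferentiableOn ℂ ψ (ball (0 : ℂ) 1) := by
      refine DifferentiableOn.div ht_diff ?_ hden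
      exact (differentiableOn_const _).sub (hg_diff.const_mul _)
    have hψbound : ∀ r : ℝ, 0 < r → r < 1 → ∀ z ∈ closedBall (0:ℂ) r, ‖ψ z‖ ≤ 1 / r ^ k := by
      intro r hr0 hr1 z hz
      have hballr : ball (0:ℂ) r ⊆ ball (0:ℂ) 1 := ball_subset_ball hr1.le
      have hclos : closure (ball (0:ℂ) r) = closedBall (0:ℂ) r := closure_ball 0 hr0.ne'
      refine Complex.norm_le_of_forall_mem_frontier_norm_le (U := ball (0:ℂ) r)
        isBounded_ball ?_ ?_ (by rw [hclos]; exact hz)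
      · constructor
        · exact hψdiff.mono hballr
        · rw [hclos]
          exact hψdiff.continuousOn.mono (closedBall_subset_ball hr1)
      · intro w hw
        rw [frontier_ball 0 hr0.ne'] at hw
        have hwr : ‖w‖ = r := by simpa [mem_sphere_iff_norm] using hw
        have hw1 : w ∈ ball (0:ℂ) 1 := by
          simp only [mem_ball, dist_zero_right, hwr]; exact hr1
        have hwne : w ≠ 0 := by
          intro h; rw [h, norm_zero] at hwr; exact hr0.ne' hwr.symm
        have htw : ‖t w‖ = ‖g w - c‖ / r ^ k := by
          have := hfactor w hw1
          rw [eq_div_iff (by positivity)]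
          calc ‖t w‖ * r ^ k = ‖w ^ k * t w‖ := by
                rw [norm_mul, norm_pow, hwr]; ring
            _ = ‖g w - c‖ := by rw [← this]
        rw [hψdef]
        simp only [norm_div]
        rw [htw, div_div]
        have hdenpos : 0 < ‖1 - (starRingEnd ℂ) c * g w‖ :=
          norm_pos_iff.mpr (hden w hw1)
        rw [div_le_div_iff₀ (mul_pos (by positivity) hdenpos) (by positivity)]
        have hmob : ‖g w - c‖ ≤ ‖1 - (starRingEnd ℂ) c * g w‖ :=
          mobius_ineq (g w) c (hg_b w hw1) ha0le
        calc ‖g w - c‖ * r ^ k = r ^ k * ‖g w - c‖ := by ring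
          _ ≤ r ^ k * ‖1 - (starRingEnd ℂ) c * g w‖ := by
              exact mul_le_mul_of_nonneg_left hmob (by positivity)
          _ = 1 * (r ^ k * ‖1 - (starRingEnd ℂ) c * g w‖) := by ring
    have hψ0 : ‖ψ 0‖ ≤ 1 := by
      have hlim : Filter.Tendsto (fun r : ℝ => 1 / r ^ k) (nhdsWithin 1 (Set.Iio 1))
          (nhds 1) := by
        have : Filter.Tendsto (fun r : ℝ => 1 / r ^ k) (nhds 1) (nhds (1 / 1 ^ k)) :=
          Filter.Tendsto.div tendsto_const_nhds ((continuous_pow k).tendsto 1) (by norm_num)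
        simpa using this.mono_left nhdsWithin_le_nhds
      refine ge_of_tendsto hlim ?_
      filter_upwards [Ioo_mem_nhdsLT_of_mem (by norm_num : (1:ℝ) ∈ Set.Ioc (0:ℝ) 1)] with r hr
      exact hψbound r hr.1 hr.2 0 (by simp [hr.1.le])
    have hψ0eq : ψ 0 = b k / (1 - (normSq c : ℂ)) := by
      show t 0 / (1 - (starRingEnd ℂ) c * g 0) = _
      rw [ht0, hg0, mul_comm, Complex.mul_conj]
    have hnorm1 : ‖(1:ℂ) - (normSq c : ℂ)‖ = 1 - ‖c‖ ^ 2 := by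
      have h1 : Complex.normSq c = ‖c‖ ^ 2 := by
        rw [Complex.normSq_eq_norm_sq]
      have h2 : ((1:ℂ) - (normSq c : ℂ)) = ((1 - ‖c‖^2 : ℝ) : ℂ) := by
        rw [h1]; push_cast; ring
      rw [h2, Complex.norm_real, Real.norm_eq_abs]
      exact abs_of_nonneg (by nlinarith [norm_nonneg c])
    have hfin : ‖b k‖ / (1 - ‖c‖ ^ 2) ≤ 1 := by
      rw [hψ0eq, norm_div, hnorm1] at hψ0
      exact hψ0
    have hpos : 0 < 1 - ‖c‖ ^ 2 := by nlinarith [norm_nonneg c]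
    rw [div_le_one hpos] at hfin
    rw [← hbk]
    exact hfin
  · -- degenerate case : ‖c‖ = 1
    have hmax : IsMaxOn (norm ∘ g) (ball (0:ℂ) 1) 0 := by
      intro z hz
      simp only [Function.comp_apply, Set.mem_setOf_eq, hg0]
      calc ‖g z‖ ≤ 1 := hg_b z hz
        _ = ‖c‖ := heq.symm
    have hconst : Set.EqOn g (Function.const ℂ (g 0)) (ball (0:ℂ) 1) :=
      Complex.eqOn_of_isPreconnected_of_isMaxOn_norm (convex_ball 0 1).isPreconnected
        isOpen_ball hg_diff (by simp) hmax
    have htzero : ∀ z ∈ ball (0:ℂ) 1, z ≠ 0 → t z = 0 := by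
      intro z hz hzne
      have h1 := hfactor z hz
      rw [hconst hz, Function.const_apply, hg0, sub_self] at h1
      have h2 : z ^ k ≠ 0 := pow_ne_zero k hzne
      field_simp at h1
      exact (mul_eq_zero.mp h1.symm).resolve_left h2
    have htcont : ContinuousAt t 0 :=
      (ht_diff.continuousOn.continuousAt (isOpen_ball.mem_nhds (by simp)))
    have ht00 : t 0 = 0 := by
      have h1 : Filter.Tendsto t (nhdsWithin 0 {(0:ℂ)}ᶜ) (nhds (t 0)) :=
        htcont.continuousWithinAt.tendsto
      have h2 : Filter.Tendsto t (nhdsWithin 0 {(0:ℂ)}ᶜ) (nhds 0) := by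
        refine Filter.Tendsto.congr' ?_ tendsto_const_nhds
        filter_upwards [self_mem_nhdsWithin,
          nhdsWithin_le_nhds (ball_mem_nhds (0:ℂ) one_pos)] with z hz1 hz2
        exact (htzero z hz2 hz1).symm
      exact tendsto_nhds_unique h1 h2
    rw [← hbk, ← ht0, ht00, heq]
    simp
end

section
/- Let T_1, …, T_m be Hilbert-space operators with ∑_{j=1}^m T_j T_j^* ≤ I, and define Δ^{(k)} = ∑_{β ⊆ {1,…,k}} (-1)^{|β|} T^β (T^β)^* where T^β denotes the product of the T_j with j ∈ β (operators commuting). Then for every 1 ≤ k ≤ m one has I - ∑_{j=1}^k T_j T_j^* ≤ Δ^{(k)} ≤ I; in particular Δ^{(m)} ≥ 0. -/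
open ContinuousLinearMap

section Aux
variable {H : Type*} [NormedAddCommGroup H] [InnerProductSpace ℂ H] [CompleteSpace H]

lemma sum_isPositive' {ι : Type*} (s : Finset ι) (f : ι → H →L[ℂ] H)
    (h : ∀ i ∈ s, (f i).IsPositive) : (∑ i ∈ s, f i).IsPositive := by
  induction s using Finset.cons_induction with
  | empty => simpa using isPositive_zero
  | cons a s ha ih =>
    rw [Finset.sum_cons]
    exact (h a (Finset.mem_cons_self a s)).add (ih fun i hi => h i (Finset.mem_cons.2 (Or.inr hi)))

lemma conj_pos' {A : H →L[ℂ] H} (hA : A.IsPositive) (S : H →L[ℂ] H) :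
    (S * A * adjoint S).IsPositive := hA.conj_adjoint S

lemma mul_adjoint_pos' (S : H →L[ℂ] H) : (S * adjoint S).IsPositive := by
  have := isPositive_one.conj_adjoint (F := H) S
  simpa [← mul_def] using this

lemma key_alg' (t p : H →L[ℂ] H) (c : ℕ) :
    ((-1 : ℂ) ^ (c + 1)) • ((t * p) * adjoint (t * p))
      = t * (-(((-1 : ℂ) ^ c) • (p * adjoint p))) * adjoint t := by
  simp only [← star_eq_adjoint, star_mul, pow_succ, mul_neg_one, neg_smul, mul_neg, neg_mul,
    neg_inj, mul_one, smul_mul_assoc, mul_smul_comm, mul_assoc]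

theorem stmt6_aux (m : ℕ) (T : Fin m → H →L[ℂ] H)
    (hcomm : ∀ i j, Commute (T i) (T j))
    (hT : (1 - ∑ j, T j * adjoint (T j)).IsPositive) :
    ∀ k : ℕ, k ≤ m →
      ((∑ β ∈ (Finset.univ.filter fun j : Fin m => (j : ℕ) < k).powerset,
            ((-1 : ℂ) ^ β.card) •
              (β.noncommProd T (fun a _ b _ _ => hcomm a b) *
                adjoint (β.noncommProd T (fun a _ b _ _ => hcomm a b)))) -
          (1 - ∑ j ∈ Finset.univ.filter fun j : Fin m => (j : ℕ) < k,
            T j * adjoint (T j))).IsPositive ∧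
      (1 - ∑ β ∈ (Finset.univ.filter fun j : Fin m => (j : ℕ) < k).powerset,
            ((-1 : ℂ) ^ β.card) •
              (β.noncommProd T (fun a _ b _ _ => hcomm a b) *
                adjoint (β.noncommProd T (fun a _ b _ _ => hcomm a b)))).IsPositive := by
  intro k
  induction k with
  | zero =>
    intro _
    have h0 : (Finset.univ.filter fun j : Fin m => (j : ℕ) < 0) = (∅ : Finset (Fin m)) := by
      simp
    rw [h0]
    constructor <;>
    · simp only [Finset.powerset_empty, Finset.sum_singleton, Finset.noncommProd_empty,
        Finset.card_empty, pow_zero, one_smul, Finset.sum_empty, ← star_eq_adjoint, star_one,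
        mul_one, sub_zero, sub_self]
      convert isPositive_zero (𝕜 := ℂ) (E := H) using 1
      erw [Finset.noncommProd_empty]
      simp
  | succ k ih =>
    intro hk1
    have hkm : k < m := hk1
    obtain ⟨ih1, ih2⟩ := ih (le_of_lt hkm)
    set sk := Finset.univ.filter fun j : Fin m => (j : ℕ) < k with hsk
    have hfilt : (Finset.univ.filter fun j : Fin m => (j : ℕ) < k + 1)
        = insert ⟨k, hkm⟩ sk := by
      ext j
      simp only [hsk, Finset.mem_filter, Finset.mem_insert, Finset.mem_univ, true_and,
        Fin.ext_iff, Fin.val_mk]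
      omega
    have hnot : (⟨k, hkm⟩ : Fin m) ∉ sk := by simp [hsk]
    set D : H →L[ℂ] H := ∑ β ∈ sk.powerset,
      ((-1 : ℂ) ^ β.card) • (β.noncommProd T (fun a _ b _ _ => hcomm a b) *
        adjoint (β.noncommProd T (fun a _ b _ _ => hcomm a b))) with hD
    set Sk : H →L[ℂ] H := ∑ j ∈ sk, T j * adjoint (T j) with hSk
    -- positivity of 1 - Sk
    have hSpos : (1 - Sk).IsPositive := by
      have hsplit := Finset.sum_filter_add_sum_filter_not Finset.univ
        (fun j : Fin m => (j : ℕ) < k) (fun j => T j * adjoint (T j))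
      have heq : 1 - Sk = (1 - ∑ j, T j * adjoint (T j))
          + ∑ j ∈ Finset.univ.filter (fun j : Fin m => ¬ (j : ℕ) < k),
              T j * adjoint (T j) := by
        rw [hSk, hsk, ← hsplit]; abel
      rw [heq]
      exact hT.add (sum_isPositive' _ _ fun i _ => mul_adjoint_pos' (T i))
    have hApos : D.IsPositive := by
      have h : D = (D - (1 - Sk)) + (1 - Sk) := by abel
      rw [h]; exact ih1.add hSpos
    -- recursion
    have hdisj : Disjoint sk.powerset (sk.powerset.image (insert (⟨k, hkm⟩ : Fin m))) := by
      rw [Finset.disjoint_left]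
      rintro β hβ hβ'
      obtain ⟨γ, hγ, rfl⟩ := Finset.mem_image.1 hβ'
      exact hnot ((Finset.mem_powerset.1 hβ) (Finset.mem_insert_self _ _))
    have hinj : ∀ β ∈ sk.powerset, ∀ γ ∈ sk.powerset,
        insert (⟨k, hkm⟩ : Fin m) β = insert ⟨k, hkm⟩ γ → β = γ := by
      intro β hβ γ hγ h
      have hb : (⟨k, hkm⟩ : Fin m) ∉ β := fun hc => hnot (Finset.mem_powerset.1 hβ hc)
      have hg : (⟨k, hkm⟩ : Fin m) ∉ γ := fun hc => hnot (Finset.mem_powerset.1 hγ hc)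
      rw [← Finset.erase_insert hb, ← Finset.erase_insert hg, h]
    have hterm : ∀ β ∈ sk.powerset,
        ((-1 : ℂ) ^ (insert (⟨k, hkm⟩ : Fin m) β).card) •
            ((insert (⟨k, hkm⟩ : Fin m) β).noncommProd T (fun a _ b _ _ => hcomm a b) *
              adjoint ((insert (⟨k, hkm⟩ : Fin m) β).noncommProd T (fun a _ b _ _ => hcomm a b)))
          = T ⟨k, hkm⟩ *
              (-(((-1 : ℂ) ^ β.card) • (β.noncommProd T (fun a _ b _ _ => hcomm a b) *
                adjoint (β.noncommProd T (fun a _ b _ _ => hcomm a b))))) *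
              adjoint (T ⟨k, hkm⟩) := by
      intro β hβ
      have hb : (⟨k, hkm⟩ : Fin m) ∉ β := fun hc => hnot (Finset.mem_powerset.1 hβ hc)
      erw [Finset.noncommProd_insert_of_notMem _ _ _ _ hb]; rw [Finset.card_insert_of_notMem hb]
      exact key_alg' _ _ _
    have hrec : (∑ β ∈ (insert (⟨k, hkm⟩ : Fin m) sk).powerset,
          ((-1 : ℂ) ^ β.card) • (β.noncommProd T (fun a _ b _ _ => hcomm a b) *
            adjoint (β.noncommProd T (fun a _ b _ _ => hcomm a b))))
        = D - T ⟨k, hkm⟩ * D * adjoint (T ⟨k, hkm⟩) := by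
      rw [Finset.powerset_insert, Finset.sum_union hdisj, Finset.sum_image hinj,
        Finset.sum_congr rfl hterm, ← Finset.sum_mul, ← Finset.mul_sum, Finset.sum_neg_distrib,
        ← hD, mul_neg, neg_mul, ← sub_eq_add_neg]
    have hSins : (∑ j ∈ insert (⟨k, hkm⟩ : Fin m) sk,
        T j * adjoint (T j)) = T ⟨k, hkm⟩ * adjoint (T ⟨k, hkm⟩) + Sk := by
      rw [Finset.sum_insert hnot, hSk]
    constructor
    · rw [hfilt, hrec, hSins]
      have heq : D - T ⟨k, hkm⟩ * D * adjoint (T ⟨k, hkm⟩)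
            - (1 - (T ⟨k, hkm⟩ * adjoint (T ⟨k, hkm⟩) + Sk))
          = (D - (1 - Sk)) + T ⟨k, hkm⟩ * (1 - D) * adjoint (T ⟨k, hkm⟩) := by
        noncomm_ring
      rw [heq]
      exact ih1.add (conj_pos' ih2 _)
    · rw [hfilt, hrec]
      have heq : 1 - (D - T ⟨k, hkm⟩ * D * adjoint (T ⟨k, hkm⟩))
          = (1 - D) + T ⟨k, hkm⟩ * D * adjoint (T ⟨k, hkm⟩) := by
        noncomm_ring
      rw [heq]
      exact ih2.add (conj_pos' hApos _)

end Aux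

open ContinuousLinearMap in
/-- If `T 1, …, T m` are commuting operators with `∑ T j T j* ≤ I`, and
`Δ^{(k)} = ∑_{β ⊆ {1,…,k}} (-1)^{|β|} T^β (T^β)*`, then for `1 ≤ k ≤ m` one has
`I - ∑_{j≤k} T j T j* ≤ Δ^{(k)} ≤ I`; in particular `Δ^{(m)} ≥ 0`. -/
theorem stmt6 {H : Type*} [NormedAddCommGroup H] [InnerProductSpace ℂ H] [CompleteSpace H]
    (m : ℕ) (T : Fin m → H →L[ℂ] H)
    (hcomm : ∀ i j, Commute (T i) (T j))
    (hT : (1 - ∑ j, T j * adjoint (T j)).IsPositive) :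
    ∀ k : ℕ, 1 ≤ k → k ≤ m →
      ((∑ β ∈ (Finset.univ.filter fun j : Fin m => (j : ℕ) < k).powerset,
            ((-1 : ℂ) ^ β.card) •
              (β.noncommProd T (fun a _ b _ _ => hcomm a b) *
                adjoint (β.noncommProd T (fun a _ b _ _ => hcomm a b)))) -
          (1 - ∑ j ∈ Finset.univ.filter fun j : Fin m => (j : ℕ) < k,
            T j * adjoint (T j))).IsPositive ∧
      (1 - ∑ β ∈ (Finset.univ.filter fun j : Fin m => (j : ℕ) < k).powerset,
            ((-1 : ℂ) ^ β.card) •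
              (β.noncommProd T (fun a _ b _ _ => hcomm a b) *
                adjoint (β.noncommProd T (fun a _ b _ _ => hcomm a b)))).IsPositive ∧
      (∑ β : Finset (Fin m),
            ((-1 : ℂ) ^ β.card) •
              (β.noncommProd T (fun a _ b _ _ => hcomm a b) *
                adjoint (β.noncommProd T (fun a _ b _ _ => hcomm a b)))).IsPositive := by
  intro k hk1 hk2
  obtain ⟨h1, h2⟩ := stmt6_aux m T hcomm hT k hk2
  refine ⟨h1, h2, ?_⟩
  have hfu : (Finset.univ.filter fun j : Fin m => (j : ℕ) < m) = Finset.univ := by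
    ext j; simp [j.isLt]
  obtain ⟨g1, -⟩ := stmt6_aux m T hcomm hT m le_rfl
  rw [hfu, Finset.powerset_univ] at g1
  have hfinal : (∑ β : Finset (Fin m),
        ((-1 : ℂ) ^ β.card) •
          (β.noncommProd T (fun a _ b _ _ => hcomm a b) *
            adjoint (β.noncommProd T (fun a _ b _ _ => hcomm a b))))
      = ((∑ β : Finset (Fin m),
            ((-1 : ℂ) ^ β.card) •
              (β.noncommProd T (fun a _ b _ _ => hcomm a b) *
                adjoint (β.noncommProd T (fun a _ b _ _ => hcomm a b))))
          - (1 - ∑ j, T j * adjoint (T j))) + (1 - ∑ j, T j * adjoint (T j)) := by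
    abel
  rw [hfinal]
  exact g1.add hT
end
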